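/- For every θ ∈ (0, π/2], ∫_0^θ 2·sin θ/(sin²θ + sin²x) dx = (2/√(1+sin²θ))·(π/2 − arctan(√(1−sin²θ)/√(1+sin²θ))). Equivalently, writing τ = sin θ and ζ₀(τ) = (2/√(1+τ²))·(π/2 − arctan(√(1−τ²)/√(1+τ²))), the integral equals ζ₀(sin θ). -/

import Mathlib

set_option maxHeartbeats 1000000


open Real Set

/-- The function `ζ₀(τ)` of the paper: the spherical length of the circular arc
from 1 to 0 making angle `arcsin τ` with `[0,1]` at `0`. -/
noncomputable def zeta0 (τ : ℝ) : ℝ :=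
  2 / Real.sqrt (1 + τ^2) *
    (π/2 - Real.arctan (Real.sqrt (1 - τ^2) / Real.sqrt (1 + τ^2)))

theorem arc_length_integral (θ : ℝ) (hθ : θ ∈ Set.Ioc (0:ℝ) (π/2)) :
    (∫ x in (0:ℝ)..θ, 2 * Real.sin θ / (Real.sin θ^2 + Real.sin x^2))
      = zeta0 (Real.sin θ) := by
  obtain ⟨hθ0, hθ2⟩ := hθ
  have hpi := Real.pi_pos
  set s : ℝ := Real.sin θ with hs
  set c : ℝ := Real.cos θ with hcdef
  have hs0 : 0 < s := Real.sin_pos_of_pos_of_lt_pi hθ0 (by linarith)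
  have hc0 : 0 ≤ c := Real.cos_nonneg_of_mem_Icc ⟨by linarith, hθ2⟩
  have hsc : s^2 + c^2 = 1 := Real.sin_sq_add_cos_sq θ
  set w : ℝ := Real.sqrt (1 + s^2) with hwdef
  have hw2 : w^2 = 1 + s^2 := Real.sq_sqrt (by positivity)
  have hw0 : 0 < w := Real.sqrt_pos.2 (by positivity)
  have hws : s < w := by nlinarith
  -- the antiderivative
  set G : ℝ → ℝ := fun x => 2/w * (x +
      Real.arctan ((w - s) * (Real.sin x * Real.cos x) /
        (s * Real.cos x ^ 2 + w * Real.sin x ^ 2))) with hG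
  have hD : ∀ x : ℝ, 0 < s * Real.cos x ^ 2 + w * Real.sin x ^ 2 := by
    intro x
    nlinarith [Real.sin_sq_add_cos_sq x, sq_nonneg (Real.sin x), sq_nonneg (Real.cos x)]
  clear_value s c w G
  have hderiv : ∀ x ∈ Set.uIcc (0:ℝ) θ,
      HasDerivAt G (2 * s / (s^2 + Real.sin x^2)) x := by
    intro x _
    rw [hG]
    set σ := Real.sin x with hσ
    set cx := Real.cos x with hcx
    have hscx : σ^2 + cx^2 = 1 := Real.sin_sq_add_cos_sq x
    have hDx : 0 < s * cx^2 + w * σ^2 := hD x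
    have hN : HasDerivAt (fun y => (w - s) * (Real.sin y * Real.cos y))
        ((w - s) * (cx * cx + σ * (-σ))) x :=
      ((Real.hasDerivAt_sin x).mul (Real.hasDerivAt_cos x)).const_mul _
    have hDd : HasDerivAt (fun y => s * Real.cos y ^ 2 + w * Real.sin y ^ 2)
        (s * ((2:ℕ) * cx ^ 1 * (-σ)) + w * ((2:ℕ) * σ ^ 1 * cx)) x := by
      exact (((Real.hasDerivAt_cos x).pow 2).const_mul s).add
        (((Real.hasDerivAt_sin x).pow 2).const_mul w)
    have hq : HasDerivAt (fun y => (w - s) * (Real.sin y * Real.cos y) /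
        (s * Real.cos y ^ 2 + w * Real.sin y ^ 2))
        (((w - s) * (cx * cx + σ * (-σ)) * (s * cx^2 + w * σ^2) -
          (w - s) * (σ * cx) * (s * ((2:ℕ) * cx ^ 1 * (-σ)) + w * ((2:ℕ) * σ ^ 1 * cx))) /
          (s * cx^2 + w * σ^2)^2) x := hN.div hDd (ne_of_gt hDx)
    have harc : HasDerivAt (fun y => Real.arctan ((w - s) * (Real.sin y * Real.cos y) /
        (s * Real.cos y ^ 2 + w * Real.sin y ^ 2)))
        ((1 / (1 + ((w - s) * (σ * cx) / (s * cx^2 + w * σ^2))^2)) *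
         (((w - s) * (cx * cx + σ * (-σ)) * (s * cx^2 + w * σ^2) -
          (w - s) * (σ * cx) * (s * ((2:ℕ) * cx ^ 1 * (-σ)) + w * ((2:ℕ) * σ ^ 1 * cx))) /
          (s * cx^2 + w * σ^2)^2)) x :=
      (Real.hasDerivAt_arctan _).comp x hq
    have hGd : HasDerivAt (fun y => 2/w * (y +
        Real.arctan ((w - s) * (Real.sin y * Real.cos y) /
          (s * Real.cos y ^ 2 + w * Real.sin y ^ 2)))) ((2/w) * (1 +
        (1 / (1 + ((w - s) * (σ * cx) / (s * cx^2 + w * σ^2))^2)) *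
        (((w - s) * (cx * cx + σ * (-σ)) * (s * cx^2 + w * σ^2) -
          (w - s) * (σ * cx) * (s * ((2:ℕ) * cx ^ 1 * (-σ)) + w * ((2:ℕ) * σ ^ 1 * cx))) /
          (s * cx^2 + w * σ^2)^2))) x := ((hasDerivAt_id x).add harc).const_mul _
    convert hGd using 1
    have h1 : (0:ℝ) < 1 + ((w - s) * (σ * cx) / (s * cx^2 + w * σ^2))^2 := by positivity
    have h2 : (0:ℝ) < s^2 + σ^2 := by positivity
    have hE : 1 + ((w - s) * (σ * cx) / (s * cx^2 + w * σ^2))^2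
        = (s^2 + σ^2) / (s * cx^2 + w * σ^2)^2 := by
      rw [div_pow, one_add_div (by positivity)]
      congr 1
      linear_combination (s^2*cx^2 + w^2*σ^2 + s^2) * hscx + σ^2 * hw2
    have hN : ((w - s) * (cx * cx + σ * (-σ)) * (s * cx^2 + w * σ^2) -
          (w - s) * (σ * cx) * (s * ((2:ℕ) * cx ^ 1 * (-σ)) + w * ((2:ℕ) * σ ^ 1 * cx)))
        = s * w - s^2 - σ^2 := by
      push_cast
      linear_combination ((w-s)*(s*cx^2-w*σ^2) + s*w - s^2) * hscx - σ^2 * hw2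
    rw [hE, hN]
    have hD2 := hDx.ne'
    have hw3 := hw0.ne'
    have h22 := h2.ne'
    rw [one_div_div, div_mul_div_comm, mul_comm ((s * cx ^ 2 + w * σ ^ 2) ^ 2),
      mul_div_mul_right _ _ (pow_ne_zero 2 hD2)]
    field_simp
    ring
  have hint : IntervalIntegrable (fun x => 2 * s / (s^2 + Real.sin x^2))
      MeasureTheory.volume 0 θ := by
    apply Continuous.intervalIntegrable
    apply Continuous.div continuous_const (by continuity)
    intro x
    nlinarith [sq_nonneg (Real.sin x)]
  rw [intervalIntegral.integral_eq_sub_of_hasDerivAt hderiv hint]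
  have hG0 : G 0 = 0 := by simp [hG]
  -- evaluation at θ
  set φ := Real.arctan (c / w) with hφ
  have hφ0 : 0 ≤ φ := by
    rw [hφ, ← Real.arctan_zero]
    exact Real.arctan_strictMono.monotone (by positivity)
  have hφ2 : φ < π / 2 := Real.arctan_lt_pi_div_two _
  set ψ := π / 2 - θ - φ with hψ
  clear_value φ ψ
  have hψ1 : -(π/2) < ψ := by rw [hψ]; linarith
  have hψ2 : ψ < π/2 := by rw [hψ]; linarith
  have hr : (0:ℝ) < Real.sqrt (1 + (c/w)^2) := Real.sqrt_pos.2 (by positivity)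
  have hsinφ : Real.sin φ = (c/w) / Real.sqrt (1 + (c/w)^2) := by
    rw [hφ]; exact Real.sin_arctan _
  have hcosφ : Real.cos φ = 1 / Real.sqrt (1 + (c/w)^2) := by
    rw [hφ]; exact Real.cos_arctan _
  have hden1 : (0:ℝ) < s * (1 / Real.sqrt (1 + (c/w)^2)) + c * ((c/w) / Real.sqrt (1 + (c/w)^2)) := by
    have h1 : 0 < s * (1 / Real.sqrt (1 + (c/w)^2)) := by positivity
    have h2 : 0 ≤ c * ((c/w) / Real.sqrt (1 + (c/w)^2)) := by positivity
    linarith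
  have hden2 : (0:ℝ) < s * c^2 + w * s^2 := by
    have h1 : 0 ≤ s * c^2 := mul_nonneg hs0.le (sq_nonneg c)
    have h2 : 0 < w * s^2 := mul_pos hw0 (pow_pos hs0 2)
    linarith
  have htanψ : Real.tan ψ = (w - s) * (s * c) / (s * c^2 + w * s^2) := by
    have hψeq : ψ = π/2 - (θ + φ) := by rw [hψ]; ring
    rw [hψeq, Real.tan_eq_sin_div_cos, Real.sin_pi_div_two_sub, Real.cos_pi_div_two_sub,
      Real.cos_add, Real.sin_add, ← hs, ← hcdef, hsinφ, hcosφ]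
    rw [div_eq_div_iff (ne_of_gt hden1) (ne_of_gt hden2)]
    have hr2 : Real.sqrt (1 + (c/w)^2) ^ 2 = 1 + (c/w)^2 := Real.sq_sqrt (by positivity)
    field_simp
    ring
  have harcψ : Real.arctan ((w - s) * (s * c) / (s * c^2 + w * s^2)) = ψ := by
    rw [← htanψ, Real.arctan_tan hψ1 hψ2]
  have hGθ : G θ = 2/w * (θ + ψ) := by
    rw [hG]
    show 2 / w * (θ + Real.arctan ((w - s) * (Real.sin θ * Real.cos θ) /
        (s * Real.cos θ ^ 2 + w * Real.sin θ ^ 2))) = _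
    rw [← hs, ← hcdef, harcψ]
  rw [hG0, hGθ, sub_zero]
  have hc_eq : Real.sqrt (1 - s^2) = c := by
    rw [show (1 : ℝ) - s^2 = c^2 by linarith, Real.sqrt_sq hc0]
  rw [zeta0, ← hwdef, hc_eq, ← hφ, hψ]
  ring
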